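/- A point x* ∈ X is a global maximizer of Φ over X (i.e. Φ x ≤ Φ x* for all x ∈ X) if and only if the pair (x*, μ*), where μ* n = (B n x*)⁻¹ *ᵥ (a n x*), is a global maximizer of Ψ over X × (Fin N → Fin m → ℂ) (i.e. Ψ x μ ≤ Ψ x* μ* for all x ∈ X and all μ). -/
import Mathlib

open Matrix ComplexConjugate
open scoped ComplexOrder

section aux

variable {m : ℕ}

lemma herm_dot {B : Matrix (Fin m) (Fin m) ℂ} (hH : B.IsHermitian)
    (v w : Fin m → ℂ) : star v ⬝ᵥ (B *ᵥ w) = star (B *ᵥ v) ⬝ᵥ w := by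
  rw [star_mulVec, hH.eq, ← dotProduct_mulVec]

lemma re_dot_comm (v w : Fin m → ℂ) :
    (star v ⬝ᵥ w).re = (star w ⬝ᵥ v).re := by
  have : star v ⬝ᵥ w = star (star w ⬝ᵥ v) := by
    rw [star_dotProduct]
  rw [this, Complex.star_def, Complex.conj_re]

lemma key_ineq {B : Matrix (Fin m) (Fin m) ℂ} (hB : B.PosDef)
    (a μ : Fin m → ℂ) :
    2 * (star μ ⬝ᵥ a).re - (star μ ⬝ᵥ (B *ᵥ μ)).re
      ≤ (star a ⬝ᵥ (B⁻¹ *ᵥ a)).re := by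
  have := hB.isUnit.invertible
  set ν := B⁻¹ *ᵥ a with hν
  have hBν : B *ᵥ ν = a := by
    rw [hν, mulVec_mulVec, Matrix.mul_inv_of_invertible, one_mulVec]
  have h0 : 0 ≤ (star (μ - ν) ⬝ᵥ (B *ᵥ (μ - ν))).re :=
    hB.posSemidef.re_dotProduct_nonneg _
  have hexp : star (μ - ν) ⬝ᵥ (B *ᵥ (μ - ν)) =
      star μ ⬝ᵥ (B *ᵥ μ) - star μ ⬝ᵥ a - star ν ⬝ᵥ (B *ᵥ μ) + star ν ⬝ᵥ a := by
    rw [star_sub, sub_dotProduct, mulVec_sub, dotProduct_sub, dotProduct_sub, hBν]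
    ring
  have hνBμ : (star ν ⬝ᵥ (B *ᵥ μ)).re = (star μ ⬝ᵥ a).re := by
    rw [herm_dot hB.isHermitian, hBν, re_dot_comm]
  have hνa : (star ν ⬝ᵥ a).re = (star a ⬝ᵥ ν).re := re_dot_comm _ _
  rw [hexp] at h0
  simp only [Complex.add_re, Complex.sub_re, hνBμ, hνa] at h0
  linarith

lemma key_eq {B : Matrix (Fin m) (Fin m) ℂ} (hB : B.PosDef) (a : Fin m → ℂ) :
    2 * (star (B⁻¹ *ᵥ a) ⬝ᵥ a).re - (star (B⁻¹ *ᵥ a) ⬝ᵥ (B *ᵥ (B⁻¹ *ᵥ a))).re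
      = (star a ⬝ᵥ (B⁻¹ *ᵥ a)).re := by
  have := hB.isUnit.invertible
  have hBν : B *ᵥ (B⁻¹ *ᵥ a) = a := by
    rw [mulVec_mulVec, Matrix.mul_inv_of_invertible, one_mulVec]
  rw [hBν, re_dot_comm (B⁻¹ *ᵥ a) a]
  ring

end aux

/-- Equivalence of global maximizers under the quadratic transform:
`x*` globally maximizes `Φ` over `X` iff the pair `(x*, μ*)`, where
`μ* n = (B n x*)⁻¹ *ᵥ (a n x*)`, globally maximizes `Ψ` over
`X × (Fin N → Fin m → ℂ)`. -/
theorem quadratic_transform_global_maximizer (m N : ℕ) (hm : 0 < m) (hN : 0 < N)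
    {α : Type*} (X : Set α) (hX : X.Nonempty)
    (a : Fin N → α → (Fin m → ℂ))
    (B : Fin N → α → Matrix (Fin m) (Fin m) ℂ)
    (hB : ∀ x ∈ X, ∀ n : Fin N, (B n x).IsHermitian ∧ (B n x).PosDef)
    (f : Fin N → ℝ → ℝ) (hf : ∀ n : Fin N, Monotone (f n))
    (Φ : α → ℝ)
    (hΦ : ∀ x : α, Φ x = ∑ n : Fin N,
      f n ((star (a n x) ⬝ᵥ ((B n x)⁻¹ *ᵥ (a n x))).re))
    (Ψ : α → (Fin N → Fin m → ℂ) → ℝ)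
    (hΨ : ∀ (x : α) (μ : Fin N → Fin m → ℂ), Ψ x μ = ∑ n : Fin N,
      f n (2 * (star (μ n) ⬝ᵥ (a n x)).re - (star (μ n) ⬝ᵥ ((B n x) *ᵥ (μ n))).re))
    (xstar : α) (hxstar : xstar ∈ X) :
    (∀ x ∈ X, Φ x ≤ Φ xstar) ↔
    (∀ x ∈ X, ∀ μ : Fin N → Fin m → ℂ,
      Ψ x μ ≤ Ψ xstar (fun n => (B n xstar)⁻¹ *ᵥ (a n xstar))) := by
  -- for x ∈ X, Ψ at the optimal μ equals Φ
  have hΨΦ : ∀ x ∈ X, Ψ x (fun n => (B n x)⁻¹ *ᵥ (a n x)) = Φ x := by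
    intro x hx
    rw [hΨ, hΦ]
    refine Finset.sum_congr rfl fun n _ => ?_
    rw [key_eq (hB x hx n).2]
  have hΨle : ∀ x ∈ X, ∀ μ, Ψ x μ ≤ Φ x := by
    intro x hx μ
    rw [hΨ, hΦ]
    exact Finset.sum_le_sum fun n _ => hf n (key_ineq (hB x hx n).2 _ _)
  constructor
  · intro h x hx μ
    calc Ψ x μ ≤ Φ x := hΨle x hx μ
    _ ≤ Φ xstar := h x hx
    _ = Ψ xstar (fun n => (B n xstar)⁻¹ *ᵥ (a n xstar)) := (hΨΦ xstar hxstar).symm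
  · intro h x hx
    calc Φ x = Ψ x (fun n => (B n x)⁻¹ *ᵥ (a n x)) := (hΨΦ x hx).symm
    _ ≤ Ψ xstar (fun n => (B n xstar)⁻¹ *ᵥ (a n xstar)) := h x hx _
    _ = Φ xstar := hΨΦ xstar hxstar
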